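/- Let t₁ ∈ ℝ, let F : [0,∞) → ℝ be continuous and bounded, let j : ℝ → ℝ be continuously differentiable with j(t) = 0 for all t ≤ t₁, and let w : [0,∞) → ℝ be continuous and satisfy w(t) = 1 + ∫₀ᵗ w(ξ) F(t−ξ) dξ for all t ≥ 0. Then the function M defined by M(t) := ∫_{t₁}^t w(t−ξ) j′(ξ) dξ satisfies the Volterra integral equation M(t) = j(t) + ∫_{t₁}^t M(ξ) F(t−ξ) dξ for all t ≥ t₁. -/

import Mathlib

open MeasureTheory intervalIntegral Set


lemma triangle_swap {a b : ℝ} (hab : a ≤ b) {g : ℝ → ℝ → ℝ}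
    (hg : Continuous fun p : ℝ × ℝ => g p.1 p.2) :
    (∫ ξ in a..b, ∫ η in ξ..b, g ξ η) = ∫ η in a..b, ∫ ξ in a..η, g ξ η := by
  set f : ℝ → ℝ → ℝ := fun ξ η => Set.indicator {p : ℝ × ℝ | p.1 < p.2}
    (fun p => g p.1 p.2) (ξ, η) with hf
  have hmeas : MeasurableSet {p : ℝ × ℝ | p.1 < p.2} :=
    (isOpen_lt continuous_fst continuous_snd).measurableSet
  have hint : Integrable (Function.uncurry f)
      ((volume.restrict (Ioc a b)).prod (volume.restrict (Ioc a b))) := by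
    rw [Measure.prod_restrict]
    have h1 : IntegrableOn (fun p : ℝ × ℝ => g p.1 p.2) (Icc a b ×ˢ Icc a b) :=
      hg.continuousOn.integrableOn_compact (isCompact_Icc.prod isCompact_Icc)
    have h2 : IntegrableOn (fun p : ℝ × ℝ => g p.1 p.2) (Ioc a b ×ˢ Ioc a b) :=
      h1.mono_set (Set.prod_mono Ioc_subset_Icc_self Ioc_subset_Icc_self)
    exact h2.indicator hmeas
  have swap := integral_integral_swap hint
  have hL : (∫ ξ in a..b, ∫ η in ξ..b, g ξ η) =
      ∫ ξ, (∫ η, f ξ η ∂(volume.restrict (Ioc a b))) ∂(volume.restrict (Ioc a b)) := by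
    rw [intervalIntegral.integral_of_le hab]
    apply setIntegral_congr_fun measurableSet_Ioc
    intro ξ hξ
    have h1 : (fun η => f ξ η) = Set.indicator (Ioi ξ) (fun η => g ξ η) := by
      funext η; simp [hf, Set.indicator_apply, Set.mem_Ioi]
    show (∫ η in ξ..b, g ξ η) = ∫ η in Ioc a b, f ξ η
    rw [h1, setIntegral_indicator measurableSet_Ioi, Set.Ioc_inter_Ioi,
      max_eq_right (le_of_lt hξ.1), intervalIntegral.integral_of_le hξ.2]
  have hR : (∫ η in a..b, ∫ ξ in a..η, g ξ η) =
      ∫ η, (∫ ξ, f ξ η ∂(volume.restrict (Ioc a b))) ∂(volume.restrict (Ioc a b)) := by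
    rw [intervalIntegral.integral_of_le hab]
    apply setIntegral_congr_fun measurableSet_Ioc
    intro η hη
    have h1 : (fun ξ => f ξ η) = Set.indicator (Iio η) (fun ξ => g ξ η) := by
      funext ξ; simp [hf, Set.indicator_apply, Set.mem_Iio]
    have h2 : Ioc a b ∩ Iio η = Ioo a η := by
      ext x; simp only [Set.mem_inter_iff, Set.mem_Ioc, Set.mem_Iio, Set.mem_Ioo]
      constructor
      · rintro ⟨⟨h3, _⟩, h4⟩; exact ⟨h3, h4⟩
      · rintro ⟨h3, h4⟩; exact ⟨⟨h3, le_trans (le_of_lt h4) hη.2⟩, h4⟩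
    show (∫ ξ in a..η, g ξ η) = ∫ ξ in Ioc a b, f ξ η
    rw [h1, setIntegral_indicator measurableSet_Iio, h2,
      intervalIntegral.integral_of_le (le_of_lt hη.1), integral_Ioc_eq_integral_Ioo]
  rw [hL, hR, swap]

/-- **Auxiliary-function representation for the renewal equation**
(the paper's Lemma on `w`, Appendix A.1). If `w` solves
`w(t) = 1 + ∫₀ᵗ w(ξ) F(t−ξ) dξ` on `[0,∞)` and `j` is C¹ with `j ≡ 0` on `(−∞, t₁]`,
then `M(t) := ∫_{t₁}^t w(t−ξ) j′(ξ) dξ` solves the Volterra equation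
`M(t) = j(t) + ∫_{t₁}^t M(ξ) F(t−ξ) dξ` for `t ≥ t₁`. -/
theorem renewal_auxiliary_solution
    (t₁ : ℝ) (F : ℝ → ℝ)
    (hF : ContinuousOn F (Set.Ici 0))
    (hF_bdd : ∃ C : ℝ, ∀ t ≥ (0 : ℝ), |F t| ≤ C)
    (j : ℝ → ℝ) (hj : ContDiff ℝ 1 j) (hj0 : ∀ t ≤ t₁, j t = 0)
    (w : ℝ → ℝ) (hw : ContinuousOn w (Set.Ici 0))
    (hw_eq : ∀ t ≥ (0 : ℝ), w t = 1 + ∫ ξ in (0 : ℝ)..t, w ξ * F (t - ξ)) :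
    ∀ t ≥ t₁,
      (∫ ξ in t₁..t, w (t - ξ) * deriv j ξ) =
        j t + ∫ ξ in t₁..t, (∫ η in t₁..ξ, w (ξ - η) * deriv j η) * F (t - ξ) := by
  intro t ht
  have hj'c : Continuous (deriv j) := hj.continuous_deriv le_rfl
  set W : ℝ → ℝ := fun s => w (max s 0) with hW
  set G : ℝ → ℝ := fun s => F (max s 0) with hG
  have hWc : Continuous W :=
    hw.comp_continuous (continuous_id.max continuous_const) fun x => Set.mem_Ici.mpr (le_max_right _ _)
  have hGc : Continuous G :=
    hF.comp_continuous (continuous_id.max continuous_const) fun x => Set.mem_Ici.mpr (le_max_right _ _)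
  have hWw : ∀ s ≥ (0:ℝ), W s = w s := fun s hs => by simp [hW, max_eq_left hs]
  have hGF : ∀ s ≥ (0:ℝ), G s = F s := fun s hs => by simp [hG, max_eq_left hs]
  -- the renewal equation for W, G
  have key : ∀ s ≥ (0:ℝ), W s = 1 + ∫ ξ in (0:ℝ)..s, W ξ * G (s - ξ) := by
    intro s hs
    rw [hWw s hs, hw_eq s hs]
    congr 1
    apply intervalIntegral.integral_congr
    intro ξ hξ
    dsimp only
    rw [Set.uIcc_of_le hs] at hξ
    rw [hWw ξ hξ.1, hGF (s - ξ) (by linarith [hξ.2])]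
  -- rewrite both sides in terms of W, G
  have L1 : (∫ ξ in t₁..t, w (t - ξ) * deriv j ξ)
      = ∫ ξ in t₁..t, W (t - ξ) * deriv j ξ := by
    apply intervalIntegral.integral_congr
    intro ξ hξ
    dsimp only
    rw [Set.uIcc_of_le ht] at hξ
    rw [hWw (t - ξ) (by linarith [hξ.2])]
  have R1 : (∫ ξ in t₁..t, (∫ η in t₁..ξ, w (ξ - η) * deriv j η) * F (t - ξ))
      = ∫ ξ in t₁..t, (∫ η in t₁..ξ, W (ξ - η) * deriv j η) * G (t - ξ) := by
    apply intervalIntegral.integral_congr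
    intro ξ hξ
    dsimp only
    rw [Set.uIcc_of_le ht] at hξ
    rw [hGF (t - ξ) (by linarith [hξ.2])]
    congr 1
    apply intervalIntegral.integral_congr
    intro η hη
    dsimp only
    rw [Set.uIcc_of_le hξ.1] at hη
    rw [hWw (ξ - η) (by linarith [hη.2])]
  rw [L1, R1]
  -- split off the constant 1
  have split : (∫ ξ in t₁..t, W (t - ξ) * deriv j ξ)
      = (∫ ξ in t₁..t, deriv j ξ) + ∫ ξ in t₁..t, (W (t - ξ) - 1) * deriv j ξ := by
    have int2 : IntervalIntegrable (fun ξ => (W (t - ξ) - 1) * deriv j ξ) volume t₁ t :=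
      (Continuous.intervalIntegrable (by fun_prop) _ _)
    rw [← intervalIntegral.integral_add (hj'c.intervalIntegrable _ _) int2]
    apply intervalIntegral.integral_congr
    intro ξ _; ring
  have hjt : (∫ ξ in t₁..t, deriv j ξ) = j t := by
    rw [intervalIntegral.integral_deriv_eq_sub
      (fun x _ => (hj.differentiable one_ne_zero).differentiableAt)
      (hj'c.intervalIntegrable _ _), hj0 t₁ le_rfl, sub_zero]
  rw [split, hjt]
  congr 1
  -- transform the remainder term
  have step2 : (∫ ξ in t₁..t, (W (t - ξ) - 1) * deriv j ξ)
      = ∫ ξ in t₁..t, ∫ η in ξ..t, W (η - ξ) * G (t - η) * deriv j ξ := by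
    apply intervalIntegral.integral_congr
    intro ξ hξ
    rw [Set.uIcc_of_le ht] at hξ
    have h1 : W (t - ξ) - 1 = ∫ s in (0:ℝ)..(t - ξ), W s * G (t - ξ - s) := by
      rw [key (t - ξ) (by linarith [hξ.2])]; ring
    have h2 : (∫ s in (0:ℝ)..(t - ξ), W s * G (t - ξ - s))
        = ∫ η in ξ..t, W (η - ξ) * G (t - η) := by
      have h3 := intervalIntegral.integral_comp_sub_right
        (fun s => W s * G (t - ξ - s)) ξ (a := ξ) (b := t)
      simp only [sub_self] at h3
      rw [← h3]
      apply intervalIntegral.integral_congr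
      intro η _
      dsimp only
      have : t - ξ - (η - ξ) = t - η := by ring
      rw [this]
    show (W (t - ξ) - 1) * deriv j ξ = _
    rw [h1, h2, ← intervalIntegral.integral_mul_const]
  have hcont : Continuous fun p : ℝ × ℝ =>
      W (p.2 - p.1) * G (t - p.2) * deriv j p.1 := by
    apply Continuous.mul
    apply Continuous.mul
    · exact hWc.comp (continuous_snd.sub continuous_fst)
    · exact hGc.comp (continuous_const.sub continuous_snd)
    · exact hj'c.comp continuous_fst
  have step3 := triangle_swap ht
    (g := fun ξ η => W (η - ξ) * G (t - η) * deriv j ξ) hcont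
  rw [step2, step3]
  apply intervalIntegral.integral_congr
  intro ξ hξ
  show (∫ η in t₁..ξ, W (ξ - η) * G (t - ξ) * deriv j η)
      = (∫ η in t₁..ξ, W (ξ - η) * deriv j η) * G (t - ξ)
  rw [← intervalIntegral.integral_mul_const]
  apply intervalIntegral.integral_congr
  intro η _; ring
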